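/- If G is a simple graph on n vertices and u, v are nonadjacent vertices with deg(u) + deg(v) ≥ n, then G is Hamiltonian if and only if the graph G + uv (obtained by adding the edge uv) is Hamiltonian. -/

import Mathlib

open SimpleGraph Walk List Finset
set_option linter.unusedSectionVars false
set_option linter.unusedVariables false
set_option maxHeartbeats 1000000

namespace BondyChvatalAux
variable {V : Type*} [DecidableEq V]

/-- Build a walk from an indexing function. -/
def walkOfFn (G : SimpleGraph V) (f : ℕ → V) :
    (m : ℕ) → (∀ j < m, G.Adj (f j) (f (j+1))) → G.Walk (f 0) (f m)
  | 0, _ => Walk.nil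
  | m+1, h => Walk.cons (h 0 (Nat.succ_pos m))
      (walkOfFn G (fun j => f (j+1)) m (fun j hj => h (j+1) (Nat.succ_lt_succ hj)))

lemma support_walkOfFn (G : SimpleGraph V) (f : ℕ → V) (m : ℕ) (h) :
    (walkOfFn G f m h).support = (List.range (m+1)).map f := by
  induction m generalizing f with
  | zero => simp [walkOfFn, List.range_succ]
  | succ m ih =>
    rw [walkOfFn, Walk.support_cons, ih]
    conv_rhs => rw [List.range_succ_eq_map]
    simp [List.map_map, Function.comp_def]

lemma edges_walkOfFn (G : SimpleGraph V) (f : ℕ → V) (m : ℕ) (h) :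
    (walkOfFn G f m h).edges = (List.range m).map (fun j => s(f j, f (j+1))) := by
  induction m generalizing f with
  | zero => simp [walkOfFn, List.range_succ]
  | succ m ih =>
    rw [walkOfFn, Walk.edges_cons, ih]
    conv_rhs => rw [List.range_succ_eq_map]
    simp [List.map_map, Function.comp_def]

lemma length_walkOfFn (G : SimpleGraph V) (f : ℕ → V) (m : ℕ) (h) :
    (walkOfFn G f m h).length = m := by
  have := support_walkOfFn G f m h
  have h2 := congrArg List.length this
  simpa [Walk.length_support] using h2

lemma support_eq_map_getVert {G : SimpleGraph V} {a b : V} (p : G.Walk a b) :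
    p.support = (List.range (p.length+1)).map p.getVert := by
  induction p with
  | nil => simp [Walk.getVert]
  | cons h p ih =>
    rw [Walk.support_cons, ih, Walk.length_cons]
    conv_rhs => rw [List.range_succ_eq_map]
    simp [List.map_map, Function.comp_def, Walk.getVert_cons_succ]

lemma mem_edges_exists_index {G : SimpleGraph V} {a b x y : V} (p : G.Walk a b)
    (h : s(x,y) ∈ p.edges) : ∃ k < p.length,
      (p.getVert k = x ∧ p.getVert (k+1) = y) ∨ (p.getVert k = y ∧ p.getVert (k+1) = x) := by
  induction p with
  | nil => simp at h
  | cons hadj p ih =>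
    rw [Walk.edges_cons, List.mem_cons] at h
    rcases h with h | h
    · refine ⟨0, by simp, ?_⟩
      rw [Sym2.eq_iff] at h
      rcases h with ⟨rfl, rfl⟩ | ⟨rfl, rfl⟩
      · exact Or.inl (by simp [Walk.getVert_cons_succ])
      · exact Or.inr (by simp [Walk.getVert_cons_succ])
    · obtain ⟨k, hk, hor⟩ := ih h
      exact ⟨k+1, by simpa using Nat.succ_lt_succ hk, by simpa [Walk.getVert_cons_succ] using hor⟩
lemma hamCycle_of_fn [Fintype V] (G : SimpleGraph V) (f : ℕ → V) (m : ℕ) (hm : 3 ≤ m)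
    (h : ∀ j < m, G.Adj (f j) (f (j+1))) (hclosed : f m = f 0)
    (hinj : ∀ x < m, ∀ y < m, f (x+1) = f (y+1) → x = y)
    (hcov : ∀ w : V, ∃ x < m, f (x+1) = w) :
    ∃ a, ∃ c : G.Walk a a, c.IsHamiltonianCycle := by
  have hinj2 : ∀ x ≤ m, ∀ y ≤ m, f x = f y → x = y ∨ (x = 0 ∧ y = m) ∨ (x = m ∧ y = 0) := by
    intro x hx y hy hxy
    match x, y with
    | 0, 0 => exact Or.inl rfl
    | 0, y+1 =>
      right; left
      refine ⟨rfl, ?_⟩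
      have : f ((m-1)+1) = f (y+1) := by
        rw [Nat.sub_add_cancel (by omega), hclosed]; exact hxy
      have := hinj (m-1) (by omega) y (by omega) this
      omega
    | x+1, 0 =>
      right; right
      refine ⟨?_, rfl⟩
      have : f (x+1) = f ((m-1)+1) := by
        rw [Nat.sub_add_cancel (by omega), hclosed]; exact hxy
      have := hinj x (by omega) (m-1) (by omega) this
      omega
    | x+1, y+1 =>
      exact Or.inl (by rw [hinj x (by omega) y (by omega) hxy])
  refine ⟨f 0, (walkOfFn G f m h).copy rfl hclosed, ?_⟩
  have hsupp : ((walkOfFn G f m h).copy rfl hclosed).support = (List.range (m+1)).map f := by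
    rw [Walk.support_copy, support_walkOfFn]
  have htail : ((walkOfFn G f m h).copy rfl hclosed).support.tail
      = (List.range m).map (fun x => f (x+1)) := by
    rw [hsupp]
    conv_lhs => rw [List.range_succ_eq_map]
    simp [List.map_map, Function.comp_def]
  have htailnd : ((walkOfFn G f m h).copy rfl hclosed).support.tail.Nodup := by
    rw [htail]
    exact List.Nodup.map_on
      (fun x hx y hy hxy => hinj x (by simpa using hx) y (by simpa using hy) hxy)
      ((List.nodup_range))
  rw [Walk.isHamiltonianCycle_iff_isCycle_and_support_count_tail_eq_one]
  constructor
  · rw [Walk.isCycle_def]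
    refine ⟨?_, ?_, htailnd⟩
    · constructor
      rw [Walk.edges_copy, edges_walkOfFn]
      refine List.Nodup.map_on ?_ (List.nodup_range)
      intro x hx y hy hxy
      simp only [List.mem_range] at hx hy
      rw [Sym2.eq_iff] at hxy
      rcases hxy with ⟨h1, h2⟩ | ⟨h1, h2⟩
      · rcases hinj2 x (by omega) y (by omega) h1 with h3 | h3 | h3 <;> omega
      · rcases hinj2 x (by omega) (y+1) (by omega) h1 with h3 | h3 | h3 <;>
          rcases hinj2 (x+1) (by omega) y (by omega) h2 with h4 | h4 | h4 <;> omega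
    · intro hnil
      have : ((walkOfFn G f m h).copy rfl hclosed).length = m := by
        rw [Walk.length_copy, length_walkOfFn]
      rw [hnil] at this
      simp at this; omega
  · intro a
    rw [htail]
    refine List.count_eq_one_of_mem ?_ ?_
    · rw [← htail]; exact htailnd
    · obtain ⟨x, hx, hfx⟩ := hcov a
      simp only [List.mem_map, List.mem_range]
      exact ⟨x, hx, hfx⟩

lemma hamPath_of_fn [Fintype V] (G : SimpleGraph V) (f : ℕ → V) (m : ℕ)
    (h : ∀ j < m, G.Adj (f j) (f (j+1)))
    (hinj : ∀ x ≤ m, ∀ y ≤ m, f x = f y → x = y)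
    (hcov : ∀ w : V, ∃ x ≤ m, f x = w) :
    (walkOfFn G f m h).IsHamiltonian := by
  intro a
  rw [support_walkOfFn]
  refine List.count_eq_one_of_mem ?_ ?_
  · exact List.Nodup.map_on
      (fun x hx y hy hxy => hinj x (by simp at hx; omega) y (by simp at hy; omega) hxy)
      (List.nodup_range)
  · obtain ⟨x, hx, hfx⟩ := hcov a
    simp only [List.mem_map, List.mem_range]
    exact ⟨x, by omega, hfx⟩
def wrapN (N m : ℕ) : ℕ := if m < N then m else m - N

def sig (i L j : ℕ) : ℕ := if j ≤ i then j else if j ≤ L then L + i + 1 - j else 0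

lemma crossover [Fintype V] (G : SimpleGraph V) [DecidableRel G.Adj] (u v : V)
    (hn : 3 ≤ Fintype.card V) (huv : u ≠ v) (hnadj : ¬ G.Adj u v)
    (hdeg : Fintype.card V ≤ G.degree u + G.degree v)
    (p : G.Walk u v) (hp : p.IsHamiltonian) : G.IsHamiltonian := by
  classical
  have hL : p.length = Fintype.card V - 1 := hp.length_eq
  set L := p.length with hLdef
  have hL2 : 2 ≤ L := by omega
  have hnodup : p.support.Nodup := hp.isPath.support_nodup
  have ginj : ∀ x ≤ L, ∀ y ≤ L, p.getVert x = p.getVert y → x = y := by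
    rw [support_eq_map_getVert] at hnodup
    intro x hx y hy
    exact fun h => List.inj_on_of_nodup_map hnodup
      (by simp only [List.mem_range]; omega : x ∈ List.range (p.length+1))
      (by simp only [List.mem_range]; omega : y ∈ List.range (p.length+1)) h
  have gmem : ∀ w : V, ∃ x ≤ L, p.getVert x = w := fun w => by
    have hw := hp.mem_support w
    rw [Walk.mem_support_iff_exists_getVert] at hw
    obtain ⟨x, h1, h2⟩ := hw; exact ⟨x, h2, h1⟩
  have g0 : p.getVert 0 = u := p.getVert_zero
  have gL : p.getVert L = v := p.getVert_length
  set S := (Finset.range L).filter (fun j => G.Adj u (p.getVert (j+1))) with hS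
  set T := (Finset.range L).filter (fun j => G.Adj (p.getVert j) v) with hT
  have hcardS : S.card = G.degree u := by
    rw [← card_neighborFinset_eq_degree]
    refine Finset.card_bij (fun j _ => p.getVert (j+1)) ?_ ?_ ?_
    · intro a ha
      rw [hS, Finset.mem_filter] at ha
      rw [mem_neighborFinset]; exact ha.2
    · intro a ha b hb hab
      rw [hS, Finset.mem_filter, Finset.mem_range] at ha hb
      have := ginj (a+1) (by omega) (b+1) (by omega) hab
      omega
    · intro w hw
      rw [mem_neighborFinset] at hw
      obtain ⟨x, hx, rfl⟩ := gmem w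
      have hx0 : x ≠ 0 := by rintro rfl; rw [g0] at hw; exact (G.irrefl hw).elim
      refine ⟨x - 1, ?_, by rw [Nat.sub_add_cancel (by omega)]⟩
      rw [hS, Finset.mem_filter, Finset.mem_range, Nat.sub_add_cancel (by omega)]
      refine ⟨?_, hw⟩
      have hxL : x ≠ L := by rintro rfl; rw [gL] at hw; exact (hnadj hw).elim
      omega
  have hcardT : T.card = G.degree v := by
    rw [← card_neighborFinset_eq_degree]
    refine Finset.card_bij (fun j _ => p.getVert j) ?_ ?_ ?_
    · intro a ha
      rw [hT, Finset.mem_filter] at ha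
      rw [mem_neighborFinset]; exact ha.2.symm
    · intro a ha b hb hab
      rw [hT, Finset.mem_filter, Finset.mem_range] at ha hb
      exact ginj a (by omega) b (by omega) hab
    · intro w hw
      rw [mem_neighborFinset] at hw
      obtain ⟨x, hx, rfl⟩ := gmem w
      have hxL : x ≠ L := by rintro rfl; rw [gL] at hw; exact (G.irrefl hw).elim
      refine ⟨x, ?_, rfl⟩
      rw [hT, Finset.mem_filter, Finset.mem_range]
      exact ⟨by omega, hw.symm⟩
  -- S ∩ T is nonempty
  have hST : (S ∩ T).Nonempty := by
    rw [← Finset.card_pos]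
    have hsub : S ∪ T ⊆ Finset.range L := by
      rw [hS, hT]
      exact Finset.union_subset (Finset.filter_subset _ _) (Finset.filter_subset _ _)
    have h1 : (S ∪ T).card ≤ L := by
      simpa using Finset.card_le_card hsub
    have h2 := Finset.card_union_add_card_inter S T
    rw [hcardS, hcardT] at h2
    omega
  obtain ⟨i, hi⟩ := hST
  rw [Finset.mem_inter, hS, hT, Finset.mem_filter, Finset.mem_filter, Finset.mem_range] at hi
  obtain ⟨⟨hiL, hSadj⟩, -, hTadj⟩ := hi
  have hi0 : i ≠ 0 := by rintro rfl; rw [g0] at hTadj; exact (hnadj hTadj).elim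
  have hi1L : i + 1 ≠ L := by
    intro h; rw [h, gL] at hSadj; exact (hnadj hSadj).elim
  have hi1L' : i + 1 < L := by omega
  -- build the Hamiltonian cycle
  intro _
  refine hamCycle_of_fn G (fun j => p.getVert (sig i L j)) (L+1) (by omega) ?_ ?_ ?_ ?_
  · intro j hj
    rcases lt_trichotomy j i with h1 | rfl | h1
    · have e1 : sig i L j = j := by unfold sig; split_ifs <;> omega
      have e2 : sig i L (j+1) = j+1 := by unfold sig; split_ifs <;> omega
      rw [e1, e2]
      exact p.adj_getVert_succ (by omega)
    · have e1 : sig j L j = j := by unfold sig; split_ifs <;> omega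
      have e2 : sig j L (j+1) = L := by unfold sig; split_ifs <;> omega
      rw [e1, e2, gL]
      exact hTadj
    · rcases eq_or_lt_of_le (by omega : j ≤ L) with rfl | hjL
      · have e1 : sig i L L = i+1 := by unfold sig; split_ifs <;> omega
        have e2 : sig i L (L+1) = 0 := by unfold sig; split_ifs <;> omega
        rw [e1, e2, g0]
        exact hSadj.symm
      · have e1 : sig i L j = (L+i-j)+1 := by unfold sig; split_ifs <;> omega
        have e2 : sig i L (j+1) = L+i-j := by unfold sig; split_ifs <;> omega
        rw [e1, e2]
        exact (p.adj_getVert_succ (by omega)).symm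
  · have e1 : sig i L (L+1) = 0 := by unfold sig; split_ifs <;> omega
    have e2 : sig i L 0 = 0 := by unfold sig; split_ifs <;> omega
    rw [e1, e2]
  · intro x hx y hy hxy
    have b1 : sig i L (x+1) ≤ L := by unfold sig; split_ifs <;> omega
    have b2 : sig i L (y+1) ≤ L := by unfold sig; split_ifs <;> omega
    have := ginj _ b1 _ b2 hxy
    unfold sig at this; split_ifs at this <;> omega
  · intro w
    obtain ⟨t, ht, rfl⟩ := gmem w
    refine ⟨(if t = 0 then L+1 else if t ≤ i then t else L+i+1-t) - 1, by split_ifs <;> omega, ?_⟩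
    congr 1
    unfold sig; split_ifs <;> omega

end BondyChvatalAux

open BondyChvatalAux in
theorem bondy_chvatal_lemma {V : Type*} [Fintype V] [DecidableEq V]
    (G : SimpleGraph V) [DecidableRel G.Adj] (u v : V)
    (hn : 3 ≤ Fintype.card V) (huv : u ≠ v) (hnadj : ¬ G.Adj u v)
    (hdeg : Fintype.card V ≤ G.degree u + G.degree v) :
    G.IsHamiltonian ↔ (G ⊔ SimpleGraph.edge u v).IsHamiltonian := by
  classical
  constructor
  · exact fun h => h.mono le_sup_left
  · intro hH
    obtain ⟨a, p, hp⟩ := hH (by omega)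
    by_cases he : s(u,v) ∈ p.edges
    · -- the cycle uses the new edge; extract a Hamiltonian path of G between u and v
      set N := p.length with hNdef
      have hN3 : 3 ≤ N := hp.isCycle.three_le_length
      have hNcard : N = Fintype.card V := hp.length_eq
      have g0 : p.getVert 0 = a := p.getVert_zero
      have gN : p.getVert N = a := p.getVert_length
      have htail : p.support.tail = (List.range N).map (fun x => p.getVert (x+1)) := by
        rw [support_eq_map_getVert]
        conv_lhs => rw [List.range_succ_eq_map]
        simp [List.map_map, Function.comp_def]
        rfl
      have htn : p.support.tail.Nodup := by
        have := hp.isCycle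
        rw [Walk.isCycle_def] at this
        exact this.2.2
      have injS : ∀ x < N, ∀ y < N, p.getVert (x+1) = p.getVert (y+1) → x = y := by
        rw [htail] at htn
        intro x hx y hy h
        exact List.inj_on_of_nodup_map htn
          (by simp only [List.mem_range]; omega : x ∈ List.range N)
          (by simp only [List.mem_range]; omega : y ∈ List.range N) h
      have ginj2 : ∀ x ≤ N, ∀ y ≤ N, p.getVert x = p.getVert y →
          x = y ∨ (x = 0 ∧ y = N) ∨ (x = N ∧ y = 0) := by
        intro x hx y hy hxy
        match x, y with
        | 0, 0 => exact Or.inl rfl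
        | 0, y+1 =>
          right; left
          refine ⟨rfl, ?_⟩
          have : p.getVert ((N-1)+1) = p.getVert (y+1) := by
            rw [Nat.sub_add_cancel (by omega)]
            exact (gN.trans g0.symm).trans hxy
          have := injS (N-1) (by omega) y (by omega) this
          omega
        | x+1, 0 =>
          right; right
          refine ⟨?_, rfl⟩
          have : p.getVert (x+1) = p.getVert ((N-1)+1) := by
            rw [Nat.sub_add_cancel (by omega)]
            exact hxy.trans (g0.trans gN.symm)
          have := injS x (by omega) (N-1) (by omega) this
          omega
        | x+1, y+1 =>
          exact Or.inl (by rw [injS x (by omega) y (by omega) hxy])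
      have gcov : ∀ w : V, ∃ t ≤ N, p.getVert t = w := fun w => by
        have hw := hp.mem_support w
        rw [Walk.mem_support_iff_exists_getVert] at hw
        obtain ⟨t, h1, h2⟩ := hw; exact ⟨t, h2, h1⟩
      obtain ⟨k, hkN, hk⟩ := mem_edges_exists_index p he
      -- the shifted-index function
      set f : ℕ → V := fun j => p.getVert (wrapN N (k+1+j)) with hf
      have hadj : ∀ j < N-1, G.Adj (f j) (f (j+1)) := by
        intro j hj
        obtain ⟨m, hm⟩ : ∃ m, wrapN N (k+1+j) = m := ⟨_, rfl⟩
        have hm1 : m < N ∧ m ≠ k ∧ (k+1+j = m ∨ k+1+j = m + N) := by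
          unfold wrapN at hm; split_ifs at hm <;> omega
        obtain ⟨m', hm'⟩ : ∃ m', wrapN N (k+2+j) = m' := ⟨_, rfl⟩
        have hm'1 : m' < N ∧ (k+2+j = m' ∨ k+2+j = m' + N) := by
          unfold wrapN at hm'; split_ifs at hm' <;> omega
        have hA : f j = p.getVert m := by rw [hf]; simp only []; rw [hm]
        have hB : f (j+1) = p.getVert (m+1) := by
          rw [hf]; simp only []
          have : k+1+(j+1) = k+2+j := by omega
          rw [this, hm']
          rcases (by omega : m' = m + 1 ∨ (m' = 0 ∧ m + 1 = N)) with h | ⟨h1, h2⟩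
          · rw [h]
          · rw [h1, g0, h2, gN]
        rw [hA, hB]
        have hHadj : (G ⊔ SimpleGraph.edge u v).Adj (p.getVert m) (p.getVert (m+1)) :=
          p.adj_getVert_succ (by omega)
        rw [sup_adj] at hHadj
        rcases hHadj with h | h
        · exact h
        · exfalso
          rw [SimpleGraph.edge_adj] at h
          obtain ⟨hcases, -⟩ := h
          have e1 : p.getVert m = p.getVert k ∧ p.getVert (m+1) = p.getVert (k+1) ∨
              p.getVert m = p.getVert (k+1) ∧ p.getVert (m+1) = p.getVert k := by
            rcases hk with ⟨h1, h2⟩ | ⟨h1, h2⟩ <;> rcases hcases with ⟨h3, h4⟩ | ⟨h3, h4⟩ <;>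
              simp [h1, h2, h3, h4]
          rcases e1 with ⟨h1, h2⟩ | ⟨h1, h2⟩
          · rcases ginj2 m (by omega) k (by omega) h1 with h3 | h3 | h3 <;> omega
          · rcases ginj2 m (by omega) (k+1) (by omega) h1 with h3 | h3 | h3 <;>
              rcases ginj2 (m+1) (by omega) k (by omega) h2 with h4 | h4 | h4 <;> omega
      have hinj : ∀ x ≤ N-1, ∀ y ≤ N-1, f x = f y → x = y := by
        intro x hx y hy hxy
        obtain ⟨m, hm⟩ : ∃ m, wrapN N (k+1+x) = m := ⟨_, rfl⟩
        obtain ⟨m', hm'⟩ : ∃ m', wrapN N (k+1+y) = m' := ⟨_, rfl⟩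
        have hm1 : m < N ∧ (k+1+x = m ∨ k+1+x = m + N) := by
          unfold wrapN at hm; split_ifs at hm <;> omega
        have hm'1 : m' < N ∧ (k+1+y = m' ∨ k+1+y = m' + N) := by
          unfold wrapN at hm'; split_ifs at hm' <;> omega
        rw [hf] at hxy; simp only [] at hxy
        rw [hm, hm'] at hxy
        rcases ginj2 m (by omega) m' (by omega) hxy with h3 | h3 | h3 <;> omega
      have hcov : ∀ w : V, ∃ x ≤ N-1, f x = w := by
        intro w
        obtain ⟨t, ht, rfl⟩ := gcov w
        rcases eq_or_lt_of_le ht with rfl | htN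
        · -- t = N : use t = 0 instead
          refine ⟨if 0 ≥ k+1 then 0 - (k+1) else 0 + N - (k+1), by split_ifs <;> omega, ?_⟩
          rw [hf]; simp only []
          have e1 : wrapN N (k+1+ if 0 ≥ k+1 then 0 - (k+1) else 0 + N - (k+1)) = 0 := by
            unfold wrapN; split_ifs <;> omega
          rw [e1]
          exact g0.trans gN.symm
        · refine ⟨if t ≥ k+1 then t - (k+1) else t + N - (k+1), by split_ifs <;> omega, ?_⟩
          rw [hf]; simp only []
          congr 1
          unfold wrapN; split_ifs <;> omega
      have hham := hamPath_of_fn G f (N-1) hadj hinj hcov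
      have hf0 : f 0 = p.getVert (k+1) := by
        rw [hf]; simp only []
        unfold wrapN; split_ifs with h
        · rfl
        · have e1 : k + 1 + 0 - N = 0 := by omega
          have e2 : k + 1 = N := by omega
          rw [e1, e2, g0, gN]
      have hfe : f (N-1) = p.getVert k := by
        rw [hf]; simp only []
        have : wrapN N (k+1+(N-1)) = k := by unfold wrapN; split_ifs <;> omega
        rw [this]
      rcases hk with ⟨h1, h2⟩ | ⟨h1, h2⟩
      · -- path from v to u
        have q := (walkOfFn G f (N-1) hadj).copy (hf0.trans h2) (hfe.trans h1)
        refine crossover G v u hn huv.symm (fun h => hnadj h.symm) (by omega)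
          ((walkOfFn G f (N-1) hadj).copy (hf0.trans h2) (hfe.trans h1)) ?_
        intro w
        rw [Walk.support_copy]
        exact hham w
      · -- path from u to v
        refine crossover G u v hn huv hnadj hdeg
          ((walkOfFn G f (N-1) hadj).copy (hf0.trans h2) (hfe.trans h1)) ?_
        intro w
        rw [Walk.support_copy]
        exact hham w
    · -- the cycle avoids the new edge: transfer it to G
      have hsub : ∀ e ∈ p.edges, e ∈ G.edgeSet := by
        intro e hep
        have h2 : e ∈ (G ⊔ SimpleGraph.edge u v).edgeSet := p.edges_subset_edgeSet hep
        rw [edgeSet_sup, Set.mem_union, edge_edgeSet_of_ne huv] at h2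
        rcases h2 with h2 | h2
        · exact h2
        · rw [Set.mem_singleton_iff] at h2
          exact absurd (h2 ▸ hep) he
      intro _
      refine ⟨a, p.transfer G hsub, ?_⟩
      have h4 : 3 ≤ p.length := hp.isCycle.three_le_length
      rw [Walk.isHamiltonianCycle_iff_isCycle_and_support_count_tail_eq_one] at hp ⊢
      obtain ⟨hc, hcount⟩ := hp
      rw [Walk.isCycle_def] at hc ⊢
      refine ⟨⟨⟨?_⟩, ?_, ?_⟩, ?_⟩
      · rw [Walk.edges_transfer]; exact hc.1.edges_nodup
      · intro hnil
        have h3 := congrArg Walk.length hnil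
        rw [Walk.length_transfer] at h3
        simp only [Walk.length_nil] at h3
        omega
      · rw [Walk.support_transfer]; exact hc.2.2
      · intro w
        rw [Walk.support_transfer]; exact hcount w
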